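/- Let K be a field and C the infinite clock graph. Let A = K × (⊕_{n∈ℕ} K) be the unital K-algebra with componentwise addition and multiplication (k, x)·(k', x') = (kk', kx' + k'x + xx') (the unitization of the non-unital algebra ⊕_{n∈ℕ} K with componentwise operations). Then the assignment v ↦ (1, 0) and eₙeₙ* ↦ (0, εₙ), where {εₙ : n ∈ ℕ} is the canonical basis of ⊕_{n∈ℕ} K, extends to a K-algebra isomorphism from the corner v L_K(C) v onto A. -/

import Mathlib

/-- A directed graph: vertices, edges, source and range maps. -/
structure DirGraph where
  V : Type
  E : Type
  src : E → V
  rng : E → V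

namespace DirGraph

/-- Generators of the Leavitt path algebra: vertices, edges, and ghost edges. -/
inductive LGen (G : DirGraph) : Type
  | vertex : G.V → LGen G
  | edge : G.E → LGen G
  | ghost : G.E → LGen G

variable (K : Type) [Field K]

/-- The free unital associative `K`-algebra on the Leavitt generators. -/
abbrev FA (G : DirGraph) : Type := FreeAlgebra K (LGen G)

/-- The generator corresponding to a vertex. -/
noncomputable def fv (G : DirGraph) (v : G.V) : FA K G := FreeAlgebra.ι K (LGen.vertex v)

/-- The generator corresponding to an edge. -/
noncomputable def fe (G : DirGraph) (e : G.E) : FA K G := FreeAlgebra.ι K (LGen.edge e)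

/-- The generator corresponding to a ghost edge. -/
noncomputable def fg (G : DirGraph) (e : G.E) : FA K G := FreeAlgebra.ι K (LGen.ghost e)

/-- The defining relations of the Leavitt path algebra of `G` over `K`. -/
inductive LeavittRel (G : DirGraph) : FA K G → FA K G → Prop
  | vertex_same (v : G.V) : LeavittRel G (fv K G v * fv K G v) (fv K G v)
  | vertex_ne (v w : G.V) (h : v ≠ w) : LeavittRel G (fv K G v * fv K G w) 0
  | src_edge (e : G.E) : LeavittRel G (fv K G (G.src e) * fe K G e) (fe K G e)
  | edge_rng (e : G.E) : LeavittRel G (fe K G e * fv K G (G.rng e)) (fe K G e)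
  | rng_ghost (e : G.E) : LeavittRel G (fv K G (G.rng e) * fg K G e) (fg K G e)
  | ghost_src (e : G.E) : LeavittRel G (fg K G e * fv K G (G.src e)) (fg K G e)
  | ghost_edge_same (e : G.E) : LeavittRel G (fg K G e * fe K G e) (fv K G (G.rng e))
  | ghost_edge_ne (e f : G.E) (h : e ≠ f) : LeavittRel G (fg K G e * fe K G f) 0
  | ck (v : G.V) (hfin : {e : G.E | G.src e = v}.Finite)
      (hne : {e : G.E | G.src e = v}.Nonempty) :
      LeavittRel G (fv K G v) (∑ e ∈ hfin.toFinset, fe K G e * fg K G e)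

/-- The quotient of the free unital `K`-algebra on the generators by the Leavitt
relations.  The Leavitt path algebra `L_K(G)` is the non-unital subalgebra of `LPA K G`
generated by the images of the generators (see `LSub`). -/
abbrev LPA (G : DirGraph) : Type := RingQuot (LeavittRel K G)

/-- The image of a vertex in `LPA K G`. -/
noncomputable def Lv (G : DirGraph) (v : G.V) : LPA K G :=
  RingQuot.mkAlgHom K (LeavittRel K G) (fv K G v)

/-- The image of an edge in `LPA K G`. -/
noncomputable def Le (G : DirGraph) (e : G.E) : LPA K G :=
  RingQuot.mkAlgHom K (LeavittRel K G) (fe K G e)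

/-- The image of a ghost edge in `LPA K G`. -/
noncomputable def Lg (G : DirGraph) (e : G.E) : LPA K G :=
  RingQuot.mkAlgHom K (LeavittRel K G) (fg K G e)

/-- The Leavitt path algebra `L_K(G)`: the (possibly non-unital) subalgebra of `LPA K G`
generated by the images of the generators. -/
noncomputable def LSub (G : DirGraph) : NonUnitalSubalgebra K (LPA K G) :=
  NonUnitalAlgebra.adjoin K
    (Set.range (Lv K G) ∪ Set.range (Le K G) ∪ Set.range (Lg K G))

theorem Lv_mem (G : DirGraph) (v : G.V) : Lv K G v ∈ LSub K G :=
  NonUnitalAlgebra.subset_adjoin K (Or.inl (Or.inl ⟨v, rfl⟩))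

theorem Le_mem (G : DirGraph) (e : G.E) : Le K G e ∈ LSub K G :=
  NonUnitalAlgebra.subset_adjoin K (Or.inl (Or.inr ⟨e, rfl⟩))

theorem Lg_mem (G : DirGraph) (e : G.E) : Lg K G e ∈ LSub K G :=
  NonUnitalAlgebra.subset_adjoin K (Or.inr ⟨e, rfl⟩)

end DirGraph

namespace DirGraph

/-- The infinite clock graph: one central vertex `none`, vertices `some n`, and for each
`n : ℕ` an edge `n` from `none` to `some n`. -/
def Clock : DirGraph where
  V := Option ℕ
  E := ℕ
  src := fun _ => none
  rng := fun n => some n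

end DirGraph

namespace DirGraph

variable (K : Type) [Field K]

theorem Lv_mul_self (G : DirGraph) (v : G.V) : Lv K G v * Lv K G v = Lv K G v := by
  have h := RingQuot.mkAlgHom_rel K (@LeavittRel.vertex_same K _ G v)
  simpa only [Lv, map_mul] using h

theorem Lv_src_mul_Le (G : DirGraph) (e : G.E) :
    Lv K G (G.src e) * Le K G e = Le K G e := by
  have h := RingQuot.mkAlgHom_rel K (@LeavittRel.src_edge K _ G e)
  simpa only [Lv, Le, map_mul] using h

theorem Lg_mul_Lv_src (G : DirGraph) (e : G.E) :
    Lg K G e * Lv K G (G.src e) = Lg K G e := by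
  have h := RingQuot.mkAlgHom_rel K (@LeavittRel.ghost_src K _ G e)
  simpa only [Lv, Lg, map_mul] using h

/-- The corner `v (L_K(G)) v` as a non-unital subalgebra. -/
noncomputable def corner (G : DirGraph) (v : G.V) : NonUnitalSubalgebra K (LPA K G) where
  carrier := {y : LPA K G | ∃ x : LPA K G, y = Lv K G v * x * Lv K G v}
  add_mem' := by
    rintro a b ⟨x, rfl⟩ ⟨y, rfl⟩
    exact ⟨x + y, by rw [mul_add, add_mul]⟩
  mul_mem' := by
    rintro a b ⟨x, rfl⟩ ⟨y, rfl⟩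
    exact ⟨x * (Lv K G v * Lv K G v) * y, by noncomm_ring⟩
  zero_mem' := ⟨0, by simp⟩
  smul_mem' := by
    rintro c a ⟨x, rfl⟩
    exact ⟨c • x, by rw [mul_smul_comm, smul_mul_assoc]⟩

theorem Lv_mem_corner (G : DirGraph) (v : G.V) : Lv K G v ∈ corner K G v :=
  ⟨Lv K G v, by rw [Lv_mul_self, Lv_mul_self]⟩

theorem clock_ee_mem_corner (n : ℕ) :
    Le K Clock n * Lg K Clock n ∈ corner K Clock none :=
  ⟨Le K Clock n * Lg K Clock n, by
    have h1 : Lv K Clock none * Le K Clock n = Le K Clock n := Lv_src_mul_Le K Clock n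
    have h2 : Lg K Clock n * Lv K Clock none = Lg K Clock n := Lg_mul_Lv_src K Clock n
    rw [← mul_assoc (Lv K Clock none) (Le K Clock n) (Lg K Clock n), h1,
      mul_assoc (Le K Clock n) (Lg K Clock n) (Lv K Clock none), h2]⟩

end DirGraph

set_option synthInstance.maxHeartbeats 1000000
set_option maxHeartbeats 1000000

open DirGraph

/-- Pointwise multiplication on `⊕_{n ∈ ℕ} K` commutes with scalars. -/
instance (K : Type) [Field K] : SMulCommClass K (ℕ →₀ K) (ℕ →₀ K) where
  smul_comm c x y := by
    ext n
    simp only [smul_eq_mul, Finsupp.smul_apply, Finsupp.mul_apply]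
    ring

/-- Pointwise multiplication on `⊕_{n ∈ ℕ} K` is compatible with scalars. -/
instance (K : Type) [Field K] : IsScalarTower K (ℕ →₀ K) (ℕ →₀ K) where
  smul_assoc c x y := by
    ext n
    simp only [smul_eq_mul, Finsupp.smul_apply, Finsupp.mul_apply]
    ring
attribute [reducible] DirGraph.Clock
namespace ClockProof
open DirGraph

variable (K : Type) [Field K]

noncomputable def Vv : LPA K Clock := Lv K Clock none
noncomputable def Ww (n : ℕ) : LPA K Clock := Lv K Clock (some n)
noncomputable def Ee (n : ℕ) : LPA K Clock := Le K Clock n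
noncomputable def Gg (n : ℕ) : LPA K Clock := Lg K Clock n
noncomputable def Pp (n : ℕ) : LPA K Clock := Le K Clock n * Lg K Clock n

theorem rVV : Vv K * Vv K = Vv K := Lv_mul_self K Clock none

theorem rVW (n : ℕ) : Vv K * Ww K n = 0 := by
  have h := RingQuot.mkAlgHom_rel K (@LeavittRel.vertex_ne K _ Clock none (some n) (by simp))
  simpa only [Vv, Ww, Lv, map_mul, map_zero] using h

theorem rWV (n : ℕ) : Ww K n * Vv K = 0 := by
  have h := RingQuot.mkAlgHom_rel K (@LeavittRel.vertex_ne K _ Clock (some n) none (by simp))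
  simpa only [Vv, Ww, Lv, map_mul, map_zero] using h

theorem rWW (n : ℕ) : Ww K n * Ww K n = Ww K n := Lv_mul_self K Clock (some n)

theorem rWWne {n m : ℕ} (h : n ≠ m) : Ww K n * Ww K m = 0 := by
  have h := RingQuot.mkAlgHom_rel K
    (@LeavittRel.vertex_ne K _ Clock (some n) (some m) (fun hc => h (Option.some_inj.mp hc)))
  simpa only [Ww, Lv, map_mul, map_zero] using h

theorem rVE (n : ℕ) : Vv K * Ee K n = Ee K n := Lv_src_mul_Le K Clock n

theorem rEW (n : ℕ) : Ee K n * Ww K n = Ee K n := by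
  have h := RingQuot.mkAlgHom_rel K (@LeavittRel.edge_rng K _ Clock n)
  simpa only [Ee, Ww, Le, Lv, map_mul] using h

theorem rWG (n : ℕ) : Ww K n * Gg K n = Gg K n := by
  have h := RingQuot.mkAlgHom_rel K (@LeavittRel.rng_ghost K _ Clock n)
  simpa only [Gg, Ww, Lg, Lv, map_mul] using h

theorem rGV (n : ℕ) : Gg K n * Vv K = Gg K n := Lg_mul_Lv_src K Clock n

theorem rGE (n : ℕ) : Gg K n * Ee K n = Ww K n := by
  have h := RingQuot.mkAlgHom_rel K (@LeavittRel.ghost_edge_same K _ Clock n)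
  simpa only [Gg, Ee, Ww, Lg, Le, Lv, map_mul] using h

theorem rGEne {n m : ℕ} (h : n ≠ m) : Gg K n * Ee K m = 0 := by
  have h := RingQuot.mkAlgHom_rel K (@LeavittRel.ghost_edge_ne K _ Clock n m h)
  simpa only [Gg, Ee, Lg, Le, map_mul, map_zero] using h

-- derived
theorem rEV (n : ℕ) : Ee K n * Vv K = 0 := by
  rw [← rEW, mul_assoc, rWV, mul_zero]

theorem rVG (n : ℕ) : Vv K * Gg K n = 0 := by
  rw [← rWG, ← mul_assoc, rVW, zero_mul]

theorem rEE (n m : ℕ) : Ee K n * Ee K m = 0 := by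
  rw [← rVE K m, ← mul_assoc, rEV, zero_mul]

theorem rGG (n m : ℕ) : Gg K n * Gg K m = 0 := by
  rw [← rGV K n, mul_assoc, rVG, mul_zero]

theorem rWE (n m : ℕ) : Ww K n * Ee K m = 0 := by
  rw [← rVE K m, ← mul_assoc, rWV, zero_mul]

theorem rGW (n m : ℕ) : Gg K n * Ww K m = 0 := by
  rw [← rGV K n, mul_assoc, rVW, mul_zero]

theorem rEWne {n m : ℕ} (h : n ≠ m) : Ee K n * Ww K m = 0 := by
  rw [← rEW K n, mul_assoc, rWWne K h, mul_zero]

theorem rWGne {n m : ℕ} (h : n ≠ m) : Ww K n * Gg K m = 0 := by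
  rw [← rWG K m, ← mul_assoc, rWWne K h, zero_mul]

-- products with Pp
theorem rVP (n : ℕ) : Vv K * Pp K n = Pp K n := by
  rw [Pp, ← mul_assoc]; rw [show Vv K * Le K Clock n = Le K Clock n from rVE K n]

theorem rPV (n : ℕ) : Pp K n * Vv K = Pp K n := by
  rw [Pp, mul_assoc]; rw [show Lg K Clock n * Vv K = Lg K Clock n from rGV K n]

theorem rPP (n : ℕ) : Pp K n * Pp K n = Pp K n := by
  show Ee K n * Gg K n * (Ee K n * Gg K n) = Ee K n * Gg K n
  rw [mul_assoc, ← mul_assoc (Gg K n), rGE, rWG]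

theorem rPPne {n m : ℕ} (h : n ≠ m) : Pp K n * Pp K m = 0 := by
  show Ee K n * Gg K n * (Ee K m * Gg K m) = 0
  rw [mul_assoc, ← mul_assoc (Gg K n), rGEne K h, zero_mul, mul_zero]

theorem rWP (n m : ℕ) : Ww K n * Pp K m = 0 := by
  show Ww K n * (Ee K m * Gg K m) = 0
  rw [← mul_assoc, rWE, zero_mul]

theorem rPW (n m : ℕ) : Pp K n * Ww K m = 0 := by
  show Ee K n * Gg K n * Ww K m = 0
  rw [mul_assoc, rGW, mul_zero]

theorem rEP (n m : ℕ) : Ee K n * Pp K m = 0 := by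
  show Ee K n * (Ee K m * Gg K m) = 0
  rw [← mul_assoc, rEE, zero_mul]

theorem rPG (n m : ℕ) : Pp K n * Gg K m = 0 := by
  show Ee K n * Gg K n * Gg K m = 0
  rw [mul_assoc, rGG, mul_zero]

theorem rPE (n : ℕ) : Pp K n * Ee K n = Ee K n := by
  show Ee K n * Gg K n * Ee K n = Ee K n
  rw [mul_assoc, rGE, rEW]

theorem rPEne {n m : ℕ} (h : n ≠ m) : Pp K n * Ee K m = 0 := by
  show Ee K n * Gg K n * Ee K m = 0
  rw [mul_assoc, rGEne K h, mul_zero]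

theorem rGP (n : ℕ) : Gg K n * Pp K n = Gg K n := by
  show Gg K n * (Ee K n * Gg K n) = Gg K n
  rw [← mul_assoc, rGE, rWG]

theorem rGPne {n m : ℕ} (h : n ≠ m) : Gg K n * Pp K m = 0 := by
  show Gg K n * (Ee K m * Gg K m) = 0
  rw [← mul_assoc, rGEne K h, zero_mul]

end ClockProof
namespace ClockProof
open DirGraph Matrix

variable (K : Type) [Field K]

/-- no CK relations in the clock graph -/
theorem clock_no_ck (v : Option ℕ) (hfin : {e : ℕ | Clock.src e = v}.Finite)
    (hne : {e : ℕ | Clock.src e = v}.Nonempty) : False := by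
  cases v with
  | none =>
    have : {e : ℕ | Clock.src e = none} = Set.univ := by
      ext e; simp [Clock]
    rw [this] at hfin
    exact Set.infinite_univ hfin
  | some n =>
    obtain ⟨e, he⟩ := hne
    simp [Clock] at he

noncomputable def chi0gen : LGen Clock → K
  | .vertex none => 1
  | .vertex (some _) => 0
  | .edge _ => 0
  | .ghost _ => 0

noncomputable def chi0 : LPA K Clock →ₐ[K] K :=
  RingQuot.liftAlgHom K ⟨FreeAlgebra.lift K (chi0gen K), by
    intro x y h
    induction h with
    | vertex_same v => cases v <;> simp [fv, chi0gen]
    | vertex_ne v w h => cases v <;> cases w <;> simp_all [fv, chi0gen]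
    | src_edge e => simp [fv, fe, chi0gen, Clock]
    | edge_rng e => simp [fv, fe, chi0gen, Clock]
    | rng_ghost e => simp [fv, fg, chi0gen, Clock]
    | ghost_src e => simp [fv, fg, chi0gen, Clock]
    | ghost_edge_same e => simp [fv, fe, fg, chi0gen, Clock]
    | ghost_edge_ne e f h => simp [fe, fg, chi0gen]
    | ck v hfin hne => exact (clock_no_ck v hfin hne).elim⟩

theorem chi0_V : chi0 K (Vv K) = 1 := by
  rw [Vv, Lv, chi0, fv, RingQuot.liftAlgHom_mkAlgHom_apply, FreeAlgebra.lift_ι_apply, chi0gen]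

theorem chi0_P (n : ℕ) : chi0 K (Pp K n) = 0 := by
  rw [Pp, Le, Lg, _root_.map_mul, chi0, fe, fg, RingQuot.liftAlgHom_mkAlgHom_apply,
    RingQuot.liftAlgHom_mkAlgHom_apply, FreeAlgebra.lift_ι_apply, FreeAlgebra.lift_ι_apply]
  simp [chi0gen]

/-- matrix units -/
noncomputable abbrev E00 : Matrix (Fin 2) (Fin 2) K := single 0 0 1
noncomputable abbrev E01 : Matrix (Fin 2) (Fin 2) K := single 0 1 1
noncomputable abbrev E10 : Matrix (Fin 2) (Fin 2) K := single 1 0 1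
noncomputable abbrev E11 : Matrix (Fin 2) (Fin 2) K := single 1 1 1

theorem mE00E00 : E00 K * E00 K = E00 K := by
  rw [E00, single_mul_single_same, one_mul]
theorem mE11E11 : E11 K * E11 K = E11 K := by
  rw [E11, single_mul_single_same, one_mul]
theorem mE00E11 : E00 K * E11 K = 0 :=
  single_mul_single_of_ne _ _ _ _ (by decide) _
theorem mE11E00 : E11 K * E00 K = 0 :=
  single_mul_single_of_ne _ _ _ _ (by decide) _
theorem mE00E01 : E00 K * E01 K = E01 K := by
  rw [E00, E01, single_mul_single_same, one_mul]
theorem mE01E11 : E01 K * E11 K = E01 K := by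
  rw [E01, E11, single_mul_single_same, one_mul]
theorem mE11E10 : E11 K * E10 K = E10 K := by
  rw [E11, E10, single_mul_single_same, one_mul]
theorem mE10E00 : E10 K * E00 K = E10 K := by
  rw [E10, E00, single_mul_single_same, one_mul]
theorem mE10E01 : E10 K * E01 K = E11 K := by
  rw [E10, E01, single_mul_single_same, one_mul]
theorem mE01E10 : E01 K * E10 K = E00 K := by
  rw [E01, E10, single_mul_single_same, one_mul]

noncomputable def dMat (M : Matrix (Fin 2) (Fin 2) K) (m n : ℕ) : Matrix (Fin 2) (Fin 2) K :=
  if m = n then M else 0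

theorem dMat_same (M : Matrix (Fin 2) (Fin 2) K) (n : ℕ) : dMat K M n n = M := if_pos rfl
theorem dMat_ne (M : Matrix (Fin 2) (Fin 2) K) {m n : ℕ} (h : m ≠ n) : dMat K M m n = 0 :=
  if_neg h

noncomputable def chiMgen (n : ℕ) : LGen Clock → Matrix (Fin 2) (Fin 2) K
  | .vertex none => E00 K
  | .vertex (some m) => dMat K (E11 K) m n
  | .edge m => dMat K (E01 K) m n
  | .ghost m => dMat K (E10 K) m n

noncomputable def chiM (n : ℕ) : LPA K Clock →ₐ[K] Matrix (Fin 2) (Fin 2) K :=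
  RingQuot.liftAlgHom K ⟨FreeAlgebra.lift K (chiMgen K n), by
    intro x y h
    induction h with
    | vertex_same v =>
      cases v with
      | none => simp only [fv, _root_.map_mul, FreeAlgebra.lift_ι_apply, chiMgen, mE00E00]
      | some m =>
        simp only [fv, _root_.map_mul, FreeAlgebra.lift_ι_apply, chiMgen]
        rcases eq_or_ne m n with rfl | hm
        · rw [dMat_same, mE11E11]
        · rw [dMat_ne K _ hm, zero_mul]
    | vertex_ne v w h =>
      simp only [fv, _root_.map_mul, map_zero, FreeAlgebra.lift_ι_apply]
      cases v with
      | none =>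
        cases w with
        | none => exact absurd rfl h
        | some m =>
          simp only [chiMgen]
          rcases eq_or_ne m n with rfl | hm
          · rw [dMat_same, mE00E11]
          · rw [dMat_ne K _ hm, mul_zero]
      | some m =>
        cases w with
        | none =>
          simp only [chiMgen]
          rcases eq_or_ne m n with rfl | hm
          · rw [dMat_same, mE11E00]
          · rw [dMat_ne K _ hm, zero_mul]
        | some m' =>
          simp only [chiMgen]
          have hmm : m ≠ m' := fun hc => h (by rw [hc])
          rcases eq_or_ne m n with rfl | hm
          · rw [dMat_ne K _ (fun hc => hmm hc.symm), mul_zero]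
          · rw [dMat_ne K _ hm, zero_mul]
    | src_edge e =>
      simp only [fv, fe, _root_.map_mul, FreeAlgebra.lift_ι_apply]
      show chiMgen K n (.vertex (Clock.src e)) * _ = _
      simp only [Clock, chiMgen]
      rcases eq_or_ne e n with rfl | he
      · rw [dMat_same, mE00E01]
      · rw [dMat_ne K _ he, mul_zero]
    | edge_rng e =>
      simp only [fv, fe, _root_.map_mul, FreeAlgebra.lift_ι_apply]
      show _ * chiMgen K n (.vertex (Clock.rng e)) = _
      simp only [Clock, chiMgen]
      rcases eq_or_ne e n with rfl | he
      · rw [dMat_same, dMat_same, mE01E11]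
      · rw [dMat_ne K _ he, zero_mul]
    | rng_ghost e =>
      simp only [fv, fg, _root_.map_mul, FreeAlgebra.lift_ι_apply]
      show chiMgen K n (.vertex (Clock.rng e)) * _ = _
      simp only [Clock, chiMgen]
      rcases eq_or_ne e n with rfl | he
      · rw [dMat_same, dMat_same, mE11E10]
      · rw [dMat_ne K _ he, dMat_ne K _ he, zero_mul]
    | ghost_src e =>
      simp only [fv, fg, _root_.map_mul, FreeAlgebra.lift_ι_apply]
      show _ * chiMgen K n (.vertex (Clock.src e)) = _
      simp only [Clock, chiMgen]
      rcases eq_or_ne e n with rfl | he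
      · rw [dMat_same, mE10E00]
      · rw [dMat_ne K _ he, zero_mul]
    | ghost_edge_same e =>
      simp only [fv, fe, fg, _root_.map_mul, FreeAlgebra.lift_ι_apply]
      show _ = chiMgen K n (.vertex (Clock.rng e))
      simp only [Clock, chiMgen]
      rcases eq_or_ne e n with rfl | he
      · rw [dMat_same, dMat_same, dMat_same, mE10E01]
      · rw [dMat_ne K _ he, dMat_ne K _ he, dMat_ne K _ he, zero_mul]
    | ghost_edge_ne e f h =>
      simp only [fe, fg, _root_.map_mul, map_zero, FreeAlgebra.lift_ι_apply, chiMgen]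
      rcases eq_or_ne e n with rfl | he
      · rw [dMat_ne K _ (fun hc => h hc.symm), mul_zero]
      · rw [dMat_ne K _ he, zero_mul]
    | ck v hfin hne => exact (clock_no_ck v hfin hne).elim⟩

theorem chiM_V (n : ℕ) : chiM K n (Vv K) = E00 K := by
  rw [Vv, Lv, chiM, fv, RingQuot.liftAlgHom_mkAlgHom_apply, FreeAlgebra.lift_ι_apply, chiMgen]

theorem chiM_P (n m : ℕ) : chiM K n (Pp K m) = if m = n then E00 K else 0 := by
  rw [Pp, Le, Lg, _root_.map_mul, chiM, fe, fg, RingQuot.liftAlgHom_mkAlgHom_apply,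
    RingQuot.liftAlgHom_mkAlgHom_apply, FreeAlgebra.lift_ι_apply, FreeAlgebra.lift_ι_apply]
  show dMat K (E01 K) m n * dMat K (E10 K) m n = if m = n then E00 K else 0
  rcases eq_or_ne m n with rfl | hm
  · rw [dMat_same, dMat_same, mE01E10, if_pos rfl]
  · rw [dMat_ne K _ hm, dMat_ne K _ hm, zero_mul, if_neg hm]

end ClockProof
namespace ClockProof
open DirGraph Submodule

variable (K : Type) [Field K]

theorem rEGne {n m : ℕ} (h : n ≠ m) : Ee K n * Gg K m = 0 := by
  rw [← rEW K n, mul_assoc, rWGne K h, mul_zero]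

theorem rEG (n : ℕ) : Ee K n * Gg K n = Pp K n := rfl

def Sgen : Set (LPA K Clock) :=
  {x | x = 1 ∨ x = Vv K ∨ (∃ n, x = Ww K n) ∨ (∃ n, x = Ee K n) ∨ (∃ n, x = Gg K n) ∨
    (∃ n, x = Pp K n)}

theorem mem1 : (1 : LPA K Clock) ∈ span K (Sgen K) := subset_span (Or.inl rfl)
theorem memV : Vv K ∈ span K (Sgen K) := subset_span (Or.inr (Or.inl rfl))
theorem memW (n : ℕ) : Ww K n ∈ span K (Sgen K) :=
  subset_span (Or.inr (Or.inr (Or.inl ⟨n, rfl⟩)))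
theorem memE (n : ℕ) : Ee K n ∈ span K (Sgen K) :=
  subset_span (Or.inr (Or.inr (Or.inr (Or.inl ⟨n, rfl⟩))))
theorem memG (n : ℕ) : Gg K n ∈ span K (Sgen K) :=
  subset_span (Or.inr (Or.inr (Or.inr (Or.inr (Or.inl ⟨n, rfl⟩)))))
theorem memP (n : ℕ) : Pp K n ∈ span K (Sgen K) :=
  subset_span (Or.inr (Or.inr (Or.inr (Or.inr (Or.inr ⟨n, rfl⟩)))))

theorem mulS : ∀ a ∈ Sgen K, ∀ b ∈ Sgen K, a * b ∈ span K (Sgen K) := by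
  rintro a (rfl | rfl | ⟨n, rfl⟩ | ⟨n, rfl⟩ | ⟨n, rfl⟩ | ⟨n, rfl⟩) b
    (rfl | rfl | ⟨m, rfl⟩ | ⟨m, rfl⟩ | ⟨m, rfl⟩ | ⟨m, rfl⟩)
  · rw [one_mul]; exact mem1 K
  · rw [one_mul]; exact memV K
  · rw [one_mul]; exact memW K m
  · rw [one_mul]; exact memE K m
  · rw [one_mul]; exact memG K m
  · rw [one_mul]; exact memP K m
  · rw [mul_one]; exact memV K
  · rw [rVV]; exact memV K
  · rw [rVW]; exact zero_mem _
  · rw [rVE]; exact memE K m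
  · rw [rVG]; exact zero_mem _
  · rw [rVP]; exact memP K m
  · rw [mul_one]; exact memW K n
  · rw [rWV]; exact zero_mem _
  · rcases eq_or_ne n m with rfl | h
    · rw [rWW]; exact memW K n
    · rw [rWWne K h]; exact zero_mem _
  · rw [rWE]; exact zero_mem _
  · rcases eq_or_ne n m with rfl | h
    · rw [rWG]; exact memG K n
    · rw [rWGne K h]; exact zero_mem _
  · rw [rWP]; exact zero_mem _
  · rw [mul_one]; exact memE K n
  · rw [rEV]; exact zero_mem _
  · rcases eq_or_ne n m with rfl | h
    · rw [rEW]; exact memE K n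
    · rw [rEWne K h]; exact zero_mem _
  · rw [rEE]; exact zero_mem _
  · rcases eq_or_ne n m with rfl | h
    · rw [rEG]; exact memP K n
    · rw [rEGne K h]; exact zero_mem _
  · rw [rEP]; exact zero_mem _
  · rw [mul_one]; exact memG K n
  · rw [rGV]; exact memG K n
  · rw [rGW]; exact zero_mem _
  · rcases eq_or_ne n m with rfl | h
    · rw [rGE]; exact memW K n
    · rw [rGEne K h]; exact zero_mem _
  · rw [rGG]; exact zero_mem _
  · rcases eq_or_ne n m with rfl | h
    · rw [rGP]; exact memG K n
    · rw [rGPne K h]; exact zero_mem _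
  · rw [mul_one]; exact memP K n
  · rw [rPV]; exact memP K n
  · rw [rPW]; exact zero_mem _
  · rcases eq_or_ne n m with rfl | h
    · rw [rPE]; exact memE K n
    · rw [rPEne K h]; exact zero_mem _
  · rw [rPG]; exact zero_mem _
  · rcases eq_or_ne n m with rfl | h
    · rw [rPP]; exact memP K n
    · rw [rPPne K h]; exact zero_mem _

theorem mul_mem_span {x y : LPA K Clock} (hx : x ∈ span K (Sgen K))
    (hy : y ∈ span K (Sgen K)) : x * y ∈ span K (Sgen K) := by
  have h := Submodule.mul_mem_mul hx hy
  rw [Submodule.span_mul_span] at h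
  refine Submodule.span_le.mpr ?_ h
  rintro z ⟨a, ha, b, hb, rfl⟩
  exact mulS K a ha b hb

theorem span_top (x : LPA K Clock) : x ∈ span K (Sgen K) := by
  obtain ⟨y, rfl⟩ := RingQuot.mkAlgHom_surjective K (LeavittRel K Clock) x
  refine FreeAlgebra.induction K _ ?_ ?_ ?_ ?_ y
  · intro r
    rw [AlgHom.commutes, Algebra.algebraMap_eq_smul_one]
    exact smul_mem _ _ (mem1 K)
  · intro g
    cases g with
    | vertex v =>
      cases v with
      | none => exact memV K
      | some n => exact memW K n
    | edge e => exact memE K e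
    | ghost e => exact memG K e
  · intro a b ha hb
    rw [_root_.map_mul]
    exact mul_mem_span K ha hb
  · intro a b ha hb
    rw [map_add]
    exact add_mem ha hb

end ClockProof
namespace ClockProof
open DirGraph Submodule

variable (K : Type) [Field K]

noncomputable def L2 : (ℕ →₀ K) →ₗ[K] LPA K Clock :=
  Finsupp.lsum K fun n => LinearMap.toSpanSingleton K _ (Pp K n)

theorem L2_apply (f : ℕ →₀ K) : L2 K f = f.sum fun n a => a • Pp K n := by
  simp [L2, Finsupp.lsum_apply, Finsupp.sum, LinearMap.toSpanSingleton_apply]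

theorem L2_single (n : ℕ) : L2 K (Finsupp.single n 1) = Pp K n := by
  rw [L2_apply]
  rw [Finsupp.sum_single_index (h := fun m (a : K) => a • Pp K m) (zero_smul K _), one_smul]

theorem VL2 (f : ℕ →₀ K) : Vv K * L2 K f = L2 K f := by
  rw [L2_apply, Finsupp.sum, Finset.mul_sum]
  exact Finset.sum_congr rfl fun n _ => by rw [mul_smul_comm, rVP]

theorem L2V (f : ℕ →₀ K) : L2 K f * Vv K = L2 K f := by
  rw [L2_apply, Finsupp.sum, Finset.sum_mul]
  exact Finset.sum_congr rfl fun n _ => by rw [smul_mul_assoc, rPV]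

theorem L2mul (f g : ℕ →₀ K) : L2 K f * L2 K g = L2 K (f * g) := by
  classical
  rw [L2_apply, L2_apply, L2_apply, Finsupp.sum, Finsupp.sum, Finsupp.sum, Finset.sum_mul]
  have step : ∀ n ∈ f.support,
      (f n • Pp K n) * ∑ m ∈ g.support, g m • Pp K m = (f n * g n) • Pp K n := by
    intro n _
    rw [Finset.mul_sum]
    have : ∀ m ∈ g.support, f n • Pp K n * (g m • Pp K m)
        = if m = n then (f n * g n) • Pp K n else 0 := by
      intro m hm
      rcases eq_or_ne m n with rfl | h
      · rw [if_pos rfl, smul_mul_smul_comm, rPP]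
      · rw [if_neg h, smul_mul_smul_comm, rPPne K (Ne.symm h), smul_zero]
    rw [Finset.sum_congr rfl this, Finset.sum_ite_eq' g.support n fun _ => (f n * g n) • Pp K n]
    by_cases hn : n ∈ g.support
    · rw [if_pos hn]
    · rw [if_neg hn, Finsupp.notMem_support_iff.mp hn, mul_zero, zero_smul]
  rw [Finset.sum_congr rfl step]
  have hsub : (f * g).support ⊆ f.support :=
    fun n hn => (Finset.mem_inter.mp (Finsupp.support_mul hn)).1
  have e1 : ∑ n ∈ (f * g).support, (f * g) n • Pp K n = ∑ n ∈ f.support, (f * g) n • Pp K n :=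
    Finset.sum_subset hsub fun n _ hn => by
      rw [Finsupp.notMem_support_iff.mp hn, zero_smul]
  rw [e1]
  exact Finset.sum_congr rfl fun n _ => by rw [Finsupp.mul_apply]

noncomputable def PhiL : Unitization K (ℕ →₀ K) →ₗ[K] LPA K Clock where
  toFun x := x.fst • Vv K + L2 K x.snd
  map_add' x y := by
    simp only [Unitization.fst_add, Unitization.snd_add, map_add, add_smul]
    abel
  map_smul' c x := by
    simp only [Unitization.fst_smul, Unitization.snd_smul, map_smul, smul_add, smul_smul,
      smul_eq_mul, RingHom.id_apply]

theorem PhiL_apply (x : Unitization K (ℕ →₀ K)) :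
    PhiL K x = x.fst • Vv K + L2 K x.snd := rfl

theorem PhiL_one : PhiL K 1 = Vv K := by
  rw [PhiL_apply, Unitization.fst_one, Unitization.snd_one, map_zero, add_zero, one_smul]

theorem PhiL_inr_single (n : ℕ) :
    PhiL K (Unitization.inr (Finsupp.single n (1 : K))) = Pp K n := by
  rw [PhiL_apply, Unitization.fst_inr, Unitization.snd_inr, zero_smul, zero_add, L2_single]

theorem V_PhiL (x : Unitization K (ℕ →₀ K)) : Vv K * PhiL K x = PhiL K x := by
  rw [PhiL_apply, mul_add, mul_smul_comm, rVV, VL2]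

theorem PhiL_V (x : Unitization K (ℕ →₀ K)) : PhiL K x * Vv K = PhiL K x := by
  rw [PhiL_apply, add_mul, smul_mul_assoc, rVV, L2V]

theorem PhiL_mul (x y : Unitization K (ℕ →₀ K)) :
    PhiL K (x * y) = PhiL K x * PhiL K y := by
  rw [PhiL_apply, PhiL_apply, PhiL_apply, Unitization.fst_mul, Unitization.snd_mul,
    map_add, map_add, map_smul, map_smul]
  simp only [add_mul, mul_add, smul_mul_assoc, mul_smul_comm, smul_smul, smul_add, rVV, VL2,
    L2V, L2mul]
  rw [mul_comm y.fst x.fst]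
  abel

theorem PhiL_injective : Function.Injective (PhiL K) := by
  rw [injective_iff_map_eq_zero]
  intro x hx
  have hfst : x.fst = 0 := by
    have h := congrArg (chi0 K) hx
    rw [map_zero, PhiL_apply, map_add, map_smul, chi0_V, L2_apply, map_finsuppSum] at h
    simpa [chi0_P] using h
  have hsnd : ∀ n, x.snd n = 0 := by
    intro n
    have h := congrArg (chiM K n) hx
    rw [map_zero, PhiL_apply, map_add, map_smul, chiM_V, L2_apply, map_finsuppSum, hfst,
      zero_smul, zero_add] at h
    simp only [map_smul] at h
    have h2 : (x.snd.sum fun m c => c • chiM K n (Pp K m)) = x.snd n • E00 K := by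
      have : ∀ (m : ℕ) (c : K), c • chiM K n (Pp K m) = if m = n then c • E00 K else 0 := by
        intro m c
        rw [chiM_P]
        rcases eq_or_ne m n with rfl | hm
        · rw [if_pos rfl, if_pos rfl]
        · rw [if_neg hm, if_neg hm, smul_zero]
      rw [Finsupp.sum_congr (g2 := fun m c => if m = n then c • E00 K else 0)
        fun m _ => this m (x.snd m)]
      rw [Finsupp.sum_ite_eq' x.snd n fun m c => c • E00 K]
      by_cases hn : n ∈ x.snd.support
      · rw [if_pos hn]
      · rw [if_neg hn, Finsupp.notMem_support_iff.mp hn, zero_smul]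
    rw [h2] at h
    have := congrFun (congrFun h 0) 0
    simpa [Matrix.smul_apply, Matrix.single_apply_same] using this
  have : x.snd = 0 := Finsupp.ext hsnd
  exact Unitization.ext (by simpa using hfst) (by simpa using this)

theorem corner_in_range (z : LPA K Clock) :
    Vv K * z * Vv K ∈ LinearMap.range (PhiL K) := by
  have hz := span_top K z
  induction hz using Submodule.span_induction with
  | mem x hx =>
    rcases hx with rfl | rfl | ⟨n, rfl⟩ | ⟨n, rfl⟩ | ⟨n, rfl⟩ | ⟨n, rfl⟩
    · rw [mul_one, rVV]; exact ⟨1, PhiL_one K⟩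
    · rw [rVV, rVV]; exact ⟨1, PhiL_one K⟩
    · rw [rVW, zero_mul]; exact zero_mem _
    · rw [rVE, rEV]; exact zero_mem _
    · rw [rVG, zero_mul]; exact zero_mem _
    · rw [rVP, rPV]; exact ⟨Unitization.inr (Finsupp.single n 1), PhiL_inr_single K n⟩
  | zero => rw [mul_zero, zero_mul]; exact zero_mem _
  | add x y hx hy ihx ihy =>
    rw [mul_add, add_mul]; exact add_mem ihx ihy
  | smul c x hx ih =>
    rw [mul_smul_comm, smul_mul_assoc]; exact smul_mem _ _ ih

end ClockProof

set_option synthInstance.maxHeartbeats 1000000 in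
set_option maxHeartbeats 1000000 in
theorem clock_corner_iso_unitization (K : Type) [Field K] :
    ∃ φ : corner K Clock none →ₙₐ[K] Unitization K (ℕ →₀ K),
      Function.Bijective φ ∧
      φ ⟨Lv K Clock none, Lv_mem_corner K Clock none⟩ = Unitization.inl (1 : K) ∧
      ∀ n : ℕ, φ ⟨Le K Clock n * Lg K Clock n, clock_ee_mem_corner K n⟩ =
        Unitization.inr (Finsupp.single n (1 : K)) := by
  classical
  have memC : ∀ x : Unitization K (ℕ →₀ K), ClockProof.PhiL K x ∈ corner K Clock none :=
    fun x => ⟨ClockProof.PhiL K x, by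
      rw [show Lv K Clock none = ClockProof.Vv K from rfl, ClockProof.V_PhiL,
        ClockProof.PhiL_V]⟩
  let Φc : Unitization K (ℕ →₀ K) →ₗ[K] corner K Clock none :=
    { toFun := fun x => ⟨ClockProof.PhiL K x, memC x⟩
      map_add' := fun x y => Subtype.ext (map_add (ClockProof.PhiL K) x y)
      map_smul' := fun c x => Subtype.ext (map_smul (ClockProof.PhiL K) c x) }
  have hinj : Function.Injective Φc := fun x y hxy =>
    ClockProof.PhiL_injective K (congrArg Subtype.val hxy)
  have hsurj : Function.Surjective Φc := by
    rintro ⟨y, z, rfl⟩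
    obtain ⟨u, hu⟩ := ClockProof.corner_in_range K z
    exact ⟨u, Subtype.ext hu⟩
  let e : Unitization K (ℕ →₀ K) ≃ₗ[K] corner K Clock none :=
    LinearEquiv.ofBijective Φc ⟨hinj, hsurj⟩
  have hmul : ∀ x y, e (x * y) = e x * e y := fun x y =>
    Subtype.ext (ClockProof.PhiL_mul K x y)
  refine ⟨{ toFun := e.symm
            map_smul' := fun c x => map_smul e.symm c x
            map_zero' := map_zero e.symm
            map_add' := fun x y => map_add e.symm x y
            map_mul' := fun a b => ?_ }, ?_, ?_, ?_⟩
  · apply e.injective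
    rw [e.apply_symm_apply, hmul, e.apply_symm_apply, e.apply_symm_apply]
  · exact e.symm.bijective
  · have h1 : e 1 = ⟨Lv K Clock none, Lv_mem_corner K Clock none⟩ :=
      Subtype.ext (ClockProof.PhiL_one K)
    show e.symm ⟨Lv K Clock none, Lv_mem_corner K Clock none⟩ = Unitization.inl (1 : K)
    rw [← h1, e.symm_apply_apply]
    exact (Unitization.inl_one (ℕ →₀ K)).symm
  · intro n
    have h2 : e (Unitization.inr (Finsupp.single n (1 : K)))
        = ⟨Le K Clock n * Lg K Clock n, clock_ee_mem_corner K n⟩ :=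
      Subtype.ext (ClockProof.PhiL_inr_single K n)
    show e.symm ⟨Le K Clock n * Lg K Clock n, clock_ee_mem_corner K n⟩
        = Unitization.inr (Finsupp.single n (1 : K))
    rw [← h2, e.symm_apply_apply]
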